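/- Let k ≥ 3 and d > k be integers and let x₁, …, x_k : [d] → {0,1} be pairwise distinct binary vectors of dimension d. Then there exist pairwise distinct indices i₁, …, i_{k−1} ∈ [d] such that for every j ∈ {2, …, k} the tuple (x₁[i₁], …, x₁[i_{k−1}]) is different from the tuple (x_j[i₁], …, x_j[i_{k−1}]). -/
import Mathlib


/-- For pairwise distinct binary vectors `x₁, …, x_k` of dimension `d > k` (with `k ≥ 3`),
there exist pairwise distinct indices `i₁, …, i_{k−1}` such that for every `j ∈ {2, …, k}`
the tuple `(x₁[i₁], …, x₁[i_{k−1}])` differs from `(x_j[i₁], …, x_j[i_{k−1}])`. -/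
theorem stmt11 (k d : ℕ) (hk : 3 ≤ k) (hd : k < d) (x : Fin k → Fin d → Bool)
    (hx : Function.Injective x) :
    ∃ idx : Fin (k - 1) → Fin d, Function.Injective idx ∧
      ∀ j : Fin k, j ≠ ⟨0, by omega⟩ →
        ∃ t : Fin (k - 1), x ⟨0, by omega⟩ (idx t) ≠ x j (idx t) := by
  set z : Fin k := ⟨0, by omega⟩ with hz
  have hwit : ∀ j : Fin k, ∃ i : Fin d, j ≠ z → x z i ≠ x j i := by
    intro j
    by_cases hj : j = z
    · exact ⟨⟨0, by omega⟩, fun h => absurd hj h⟩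
    · have : x z ≠ x j := fun h => hj (hx h).symm
      obtain ⟨i, hi⟩ := Function.ne_iff.mp this
      exact ⟨i, fun _ => hi⟩
  choose f hf using hwit
  set S : Finset (Fin d) := (Finset.univ.erase z).image f with hS
  have hScard : S.card ≤ k - 1 := by
    calc S.card ≤ (Finset.univ.erase z).card := Finset.card_image_le
    _ = k - 1 := by rw [Finset.card_erase_of_mem (Finset.mem_univ z), Finset.card_univ,
        Fintype.card_fin]
  obtain ⟨T, hST, hTcard⟩ := Finset.exists_superset_card_eq hScard
    (by simp [Fintype.card_fin]; omega)
  have e := T.equivFinOfCardEq hTcard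
  refine ⟨fun t => (e.symm t : Fin d), ?_, ?_⟩
  · intro a b hab
    have : e.symm a = e.symm b := Subtype.ext hab
    exact e.symm.injective this
  · intro j hj
    have hfj : f j ∈ T := hST (Finset.mem_image.mpr ⟨j, Finset.mem_erase.mpr ⟨hj, Finset.mem_univ j⟩, rfl⟩)
    refine ⟨e ⟨f j, hfj⟩, ?_⟩
    simpa using hf j hj
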